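/- Among all matrices P ∈ ℝ^{m×n} satisfying PS = I_m (equivalently SPS = S with PS the identity), the matrix P* = (SᵀW⁻¹S)⁻¹SᵀW⁻¹ minimizes the trace of the reconciled error covariance Tr(SPW PᵀSᵀ), where W is the symmetric positive definite covariance of the base forecast errors and S has full column rank. -/

import Mathlib

open Matrix

lemma psd_trace_nonneg {k : ℕ} {M : Matrix (Fin k) (Fin k) ℝ}
    (hM : M.PosSemidef) : 0 ≤ M.trace := by
  rw [Matrix.trace]
  apply Finset.sum_nonneg
  intro i _
  have h := hM.diag_nonneg (i := i)
  simpa [dotProduct, Matrix.mulVec, Pi.single_apply, Finset.sum_ite_eq,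
    Matrix.diag] using h

/-- MinT optimality: among all `P` with `PS = I`, the matrix
`P* = (SᵀW⁻¹S)⁻¹SᵀW⁻¹` minimizes the trace of the reconciled error covariance
`Tr(SPWPᵀSᵀ)`, where `W` is the symmetric positive definite covariance of the base forecast
errors and `S` has full column rank. -/
theorem minT_trace_optimal {n m : ℕ}
    (S : Matrix (Fin n) (Fin m) ℝ) (W : Matrix (Fin n) (Fin n) ℝ)
    (hW : W.PosDef) (hS : Function.Injective S.mulVec)
    (P : Matrix (Fin m) (Fin n) ℝ) (hP : P * S = 1) :
    (S * ((S.transpose * W⁻¹ * S)⁻¹ * S.transpose * W⁻¹) * W *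
        ((S.transpose * W⁻¹ * S)⁻¹ * S.transpose * W⁻¹).transpose * S.transpose).trace ≤
      (S * P * W * P.transpose * S.transpose).trace := by
  have hWinv : W⁻¹.PosDef := hW.inv
  -- A = SᵀW⁻¹S is posdef hence invertible
  set A := S.transpose * W⁻¹ * S with hA
  have hApd : A.PosDef := by
    refine Matrix.PosDef.of_dotProduct_mulVec_pos ?_ ?_
    · have hsym : W⁻¹.transpose = W⁻¹ := by
        have := hWinv.isHermitian
        rwa [Matrix.IsHermitian, Matrix.conjTranspose_eq_transpose_of_trivial] at this
      show A.conjTranspose = A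
      rw [hA]
      simp [Matrix.conjTranspose_mul, Matrix.mul_assoc, hsym,
        Matrix.conjTranspose_eq_transpose_of_trivial]
    · intro x hx
      have hSx : S.mulVec x ≠ 0 := by
        intro h
        apply hx
        apply hS
        simpa using h
      have hpos := hWinv.dotProduct_mulVec_pos hSx
      have key : x ᵥ* (S.transpose * W⁻¹ * S) ⬝ᵥ x
          = (S.mulVec x) ⬝ᵥ (W⁻¹ *ᵥ (S.mulVec x)) := by
        rw [Matrix.mul_assoc, ← Matrix.vecMul_vecMul, Matrix.vecMul_transpose,
          ← Matrix.vecMul_vecMul, ← dotProduct_mulVec, ← dotProduct_mulVec]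
      simp only [hA, RCLike.re_to_real, star_trivial] at hpos ⊢
      rw [dotProduct_mulVec, key]
      exact hpos
  have hAunit : IsUnit A.det := hApd.det_pos.ne'.isUnit
  have hAinv : A⁻¹ * A = 1 := Matrix.nonsing_inv_mul A hAunit
  have hWunit : IsUnit W.det := hW.det_pos.ne'.isUnit
  have hWWinv : W * W⁻¹ = 1 := Matrix.mul_nonsing_inv W hWunit
  have hWsym : W.transpose = W := by have := hW.isHermitian; rwa [Matrix.IsHermitian, Matrix.conjTranspose_eq_transpose_of_trivial] at this
  have hWinvsym : W⁻¹.transpose = W⁻¹ := by have := hWinv.isHermitian; rwa [Matrix.IsHermitian, Matrix.conjTranspose_eq_transpose_of_trivial] at this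
  set Pstar := A⁻¹ * S.transpose * W⁻¹ with hPs
  set D := P - Pstar with hD
  have hPsS : Pstar * S = 1 := by
    rw [hPs, Matrix.mul_assoc, Matrix.mul_assoc, ← Matrix.mul_assoc S.transpose, ← hA, hAinv]
  have hDS : D * S = 0 := by
    rw [hD, Matrix.sub_mul, hP, hPsS, sub_self]
  -- cross term
  have hcross : D * W * Pstar.transpose = 0 := by
    have : Pstar.transpose = W⁻¹ * (S * (A⁻¹).transpose) := by
      rw [hPs]
      simp [Matrix.transpose_mul, hWinvsym, Matrix.mul_assoc]
    rw [this, ← Matrix.mul_assoc, Matrix.mul_assoc D W W⁻¹, hWWinv, Matrix.mul_one,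
      ← Matrix.mul_assoc, hDS, Matrix.zero_mul]
  have hexp : S * P * W * P.transpose * S.transpose
      = S * Pstar * W * Pstar.transpose * S.transpose
        + S * D * W * D.transpose * S.transpose := by
    have hPD : P = Pstar + D := by rw [hD]; abel
    have hcrossT : Pstar * W * D.transpose = 0 := by
      have := congrArg Matrix.transpose hcross
      simpa [Matrix.transpose_mul, hWsym, Matrix.mul_assoc] using this
    rw [hPD]
    simp only [Matrix.transpose_add, Matrix.add_mul, Matrix.mul_add]
    have h1 : S * (D * W * Pstar.transpose) * S.transpose = 0 := by
      rw [hcross]; simp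
    have h2 : S * (Pstar * W * D.transpose) * S.transpose = 0 := by
      rw [hcrossT]; simp
    have h1' : S * D * W * Pstar.transpose * S.transpose = 0 := by
      simpa [Matrix.mul_assoc] using h1
    have h2' : S * Pstar * W * D.transpose * S.transpose = 0 := by
      simpa [Matrix.mul_assoc] using h2
    rw [h1', h2']
    abel
  rw [hexp, Matrix.trace_add]
  have hpsd : (S * D * W * D.transpose * S.transpose).PosSemidef := by
    have := hW.posSemidef.mul_mul_conjTranspose_same (S * D)
    simpa [Matrix.conjTranspose_mul, Matrix.mul_assoc] using this
  have := psd_trace_nonneg hpsd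
  linarith
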